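/- arXiv:math/0602207 — 4 statements merged into one kernel-verified Lean document; each statement's English description precedes it below -/
import Mathlib

section
/- If a sequence of complex numbers (a_k) satisfies ∑_{n≥1} (√(∑_{k≥n} |a_k|²))/(n √(log n)) < ∞, then ∑_{k≥1} 2^{k/2} (∑_{l=2^{2^k}+1}^{2^{2^{k+1}}} |a_l|²)^{1/2} < ∞. -/
open Finset Real

noncomputable def T2 (a : ℕ → ℂ) (n : ℕ) : ℝ := ∑' k : {k : ℕ // n ≤ k}, ‖a k.1‖ ^ 2

lemma T2_nonneg (a : ℕ → ℂ) (n : ℕ) : 0 ≤ T2 a n :=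
  tsum_nonneg fun k => by positivity

lemma T2_eq (a : ℕ → ℂ) (n : ℕ) :
    T2 a n = ∑' k, Set.indicator {k : ℕ | n ≤ k} (fun k => ‖a k‖ ^ 2) k :=
  _root_.tsum_subtype {k : ℕ | n ≤ k} (fun k => ‖a k‖ ^ 2)

lemma T2_anti (a : ℕ → ℂ) (hsq : Summable fun k => ‖a k‖ ^ 2) {m n : ℕ} (hmn : m ≤ n) :
    T2 a n ≤ T2 a m := by
  rw [T2_eq, T2_eq]
  refine Summable.tsum_le_tsum (fun k => ?_) (hsq.indicator _) (hsq.indicator _)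
  refine Set.indicator_le_indicator_of_subset (fun x hx => le_trans hmn hx) (fun x => by positivity) k

lemma sum_le_T2 (a : ℕ → ℂ) (hsq : Summable fun k => ‖a k‖ ^ 2) (m : ℕ) (s : Finset ℕ)
    (hs : ∀ l ∈ s, m ≤ l) : ∑ l ∈ s, ‖a l‖ ^ 2 ≤ T2 a m := by
  rw [T2_eq]
  calc ∑ l ∈ s, ‖a l‖ ^ 2
      = ∑ l ∈ s, Set.indicator {k : ℕ | m ≤ k} (fun k => ‖a k‖ ^ 2) l := by
        refine Finset.sum_congr rfl fun l hl => ?_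
        exact (Set.indicator_of_mem (show l ∈ {k : ℕ | m ≤ k} from hs l hl) (fun k => ‖a k‖ ^ 2)).symm
    _ ≤ ∑' l, Set.indicator {k : ℕ | m ≤ k} (fun k => ‖a k‖ ^ 2) l :=
        Summable.sum_le_tsum s (fun l _ => Set.indicator_nonneg (fun x _ => by positivity) _)
          (hsq.indicator _)

lemma harmonic_lb (M : ℕ) : ∀ N : ℕ, M ≤ N →
    Real.log (N + 1) - Real.log (M + 1) ≤ ∑ n ∈ Finset.Ioc M N, (1 : ℝ) / n := by
  intro N
  induction N with
  | zero => intro hM; interval_cases M <;> simp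
  | succ N ih =>
    intro hM
    rcases Nat.lt_or_ge M (N + 1) with hlt | hge
    · have hMN : M ≤ N := Nat.lt_succ_iff.mp hlt
      rw [Finset.sum_Ioc_succ_top hMN]
      have hstep : Real.log (N + 1 + 1) - Real.log (N + 1) ≤ 1 / (N + 1 : ℝ) := by
        have hp : (0:ℝ) < (N + 1 : ℝ) := by positivity
        have hq : (0:ℝ) < (N + 1 + 1 : ℝ) := by positivity
        rw [← Real.log_div (by positivity) (by positivity)]
        refine le_trans (Real.log_le_sub_one_of_pos (by positivity)) ?_
        rw [div_sub_one hp.ne']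
        ring_nf
        exact le_refl _
      have := ih hMN
      push_cast
      push_cast at this hstep
      nlinarith [this, hstep]
    · have hM' : M = N + 1 := le_antisymm hM hge
      subst hM'
      simp

lemma block_summable (f : ℕ → ℝ) (hf : Summable f) (hf0 : ∀ n, 0 ≤ f n) (M : ℕ → ℕ)
    (hM : Monotone M) : Summable fun k => ∑ n ∈ Finset.Ioc (M k) (M (k + 1)), f n := by
  apply summable_of_sum_range_le (c := ∑' n, f n)
    (fun k => Finset.sum_nonneg fun n _ => hf0 n)
  intro K
  have e : ∑ k ∈ Finset.range K, ∑ n ∈ Finset.Ioc (M k) (M (k + 1)), f n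
      = ∑ n ∈ Finset.Ioc (M 0) (M K), f n := by
    induction K with
    | zero => simp
    | succ K ih =>
      rw [Finset.sum_range_succ, ih,
        Finset.sum_Ioc_consecutive _ (hM (Nat.zero_le K)) (hM (Nat.le_succ K))]
  rw [e]
  exact Summable.sum_le_tsum _ (fun n _ => hf0 n) hf

lemma sqrt_pow_eq (j : ℕ) : Real.sqrt ((2:ℝ) ^ (j+1)) = (2:ℝ) ^ (((j:ℝ) + 1) / 2) := by
  rw [← Real.rpow_natCast 2 (j+1), Real.sqrt_eq_rpow, ← Real.rpow_mul (by norm_num)]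
  congr 1
  push_cast
  ring

lemma key_bound (a : ℕ → ℂ) (hsq : Summable fun k => ‖a k‖ ^ 2) (j : ℕ) (hj : 1 ≤ j) :
    (2:ℝ) ^ (((j:ℝ) + 1) / 2) * Real.sqrt (T2 a (2 ^ 2 ^ (j + 1))) ≤
      (4 / Real.sqrt (Real.log 2)) *
        ∑ n ∈ Finset.Ioc (2 ^ 2 ^ j) (2 ^ 2 ^ (j + 1)),
          Real.sqrt (T2 a n) / ((n : ℝ) * Real.sqrt (Real.log n)) := by
  have hL : (0:ℝ) < Real.log 2 := Real.log_pos one_lt_two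
  have hsL : (0:ℝ) < Real.sqrt (Real.log 2) := Real.sqrt_pos.mpr hL
  set L := Real.log 2 with hLdef
  set s : ℝ := (2:ℝ) ^ (((j:ℝ) + 1) / 2) with hs
  have hs0 : (0:ℝ) < s := Real.rpow_pos_of_pos (by norm_num) _
  set t := Real.sqrt (T2 a (2 ^ 2 ^ (j + 1))) with ht
  have ht0 : 0 ≤ t := Real.sqrt_nonneg _
  have hNle : (2:ℕ) ^ 2 ^ j ≤ 2 ^ 2 ^ (j + 1) :=
    Nat.pow_le_pow_right (by norm_num) (Nat.pow_le_pow_right (by norm_num) (Nat.le_succ j))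
  have hN2 : (2:ℕ) ≤ 2 ^ 2 ^ j := by
    calc (2:ℕ) = 2 ^ 1 := rfl
    _ ≤ 2 ^ 2 ^ j := Nat.pow_le_pow_right (by norm_num) (Nat.one_le_two_pow)
  -- sqrt of log bound
  have hss : s * s = (2:ℝ) ^ (j + 1) := by
    rw [hs, ← Real.rpow_add (by norm_num), ← Real.rpow_natCast 2 (j+1)]
    congr 1
    push_cast
    ring
  -- per-term bound
  have hterm : ∀ n ∈ Finset.Ioc ((2:ℕ) ^ 2 ^ j) (2 ^ 2 ^ (j + 1)),
      t / (s * Real.sqrt L) * ((1:ℝ) / n) ≤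
        Real.sqrt (T2 a n) / ((n : ℝ) * Real.sqrt (Real.log n)) := by
    intro n hn
    obtain ⟨hn1, hn2⟩ := Finset.mem_Ioc.mp hn
    have hn2' : (2:ℕ) < n := lt_of_le_of_lt hN2 hn1
    have hnR : (2:ℝ) < (n:ℝ) := by exact_mod_cast hn2'
    have hlogn : (0:ℝ) < Real.log n := Real.log_pos (by linarith)
    have hlog_le : Real.log n ≤ (2:ℝ) ^ (j + 1) * L := by
      have h1 : Real.log n ≤ Real.log ((2:ℕ) ^ 2 ^ (j+1) : ℝ) :=
        Real.log_le_log (by linarith) (by exact_mod_cast hn2)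
      refine le_trans h1 ?_
      push_cast
      rw [Real.log_pow]
      push_cast
      rw [hLdef]
    have hsqrt_le : Real.sqrt (Real.log n) ≤ s * Real.sqrt L := by
      refine le_trans (Real.sqrt_le_sqrt hlog_le) ?_
      rw [Real.sqrt_mul (by positivity), sqrt_pow_eq]
    have heq : t / (s * Real.sqrt L) * ((1:ℝ) / n) = t / ((n:ℝ) * (s * Real.sqrt L)) := by
      rw [div_mul_div_comm, mul_one, mul_comm (s * Real.sqrt L) (n:ℝ)]
    rw [heq]
    refine div_le_div₀ (Real.sqrt_nonneg _) (Real.sqrt_le_sqrt (T2_anti a hsq hn2))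
      (by positivity) ?_
    exact mul_le_mul_of_nonneg_left hsqrt_le (by positivity)
  -- sum bound
  set S := ∑ n ∈ Finset.Ioc ((2:ℕ) ^ 2 ^ j) (2 ^ 2 ^ (j + 1)), (1:ℝ) / n with hS
  have hsum : t / (s * Real.sqrt L) * S ≤
      ∑ n ∈ Finset.Ioc ((2:ℕ) ^ 2 ^ j) (2 ^ 2 ^ (j + 1)),
        Real.sqrt (T2 a n) / ((n : ℝ) * Real.sqrt (Real.log n)) := by
    rw [hS, Finset.mul_sum]
    exact Finset.sum_le_sum hterm
  -- harmonic bound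
  have hharm := harmonic_lb ((2:ℕ) ^ 2 ^ j) ((2:ℕ) ^ 2 ^ (j + 1)) hNle
  have e1 : (2:ℝ) ^ (j + 1) * L ≤ Real.log (((2:ℕ) ^ 2 ^ (j + 1) : ℝ) + 1) := by
    have h1 : Real.log (((2:ℕ) ^ 2 ^ (j + 1) : ℕ) : ℝ) ≤
        Real.log (((2:ℕ) ^ 2 ^ (j + 1) : ℝ) + 1) := by
      refine Real.log_le_log ?_ ?_
      · have : (2:ℕ) ≤ 2 ^ 2 ^ (j+1) := le_trans hN2 hNle
        have : (2:ℝ) ≤ ((2:ℕ) ^ 2 ^ (j+1) : ℕ) := by exact_mod_cast this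
        push_cast at this ⊢
        linarith
      · push_cast
        linarith
    refine le_trans (le_of_eq ?_) h1
    push_cast
    rw [Real.log_pow]
    push_cast
    rw [hLdef]
  have e2 : Real.log (((2:ℕ) ^ 2 ^ j : ℝ) + 1) ≤ L + (2:ℝ) ^ j * L := by
    have h1 : ((2:ℕ) ^ 2 ^ j : ℝ) + 1 ≤ 2 * ((2:ℕ) ^ 2 ^ j : ℝ) := by
      have : (2:ℝ) ≤ ((2:ℕ) ^ 2 ^ j : ℕ) := by exact_mod_cast hN2
      push_cast at this ⊢
      linarith
    have h2 : Real.log (((2:ℕ) ^ 2 ^ j : ℝ) + 1) ≤ Real.log (2 * ((2:ℕ) ^ 2 ^ j : ℝ)) :=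
      Real.log_le_log (by positivity) h1
    refine le_trans h2 (le_of_eq ?_)
    rw [Real.log_mul (by norm_num) (by positivity)]
    push_cast
    rw [Real.log_pow]
    push_cast
    rw [hLdef]
  have hX : (2:ℝ) ^ (j + 1) * L - (2:ℝ) ^ j * L - L ≤ S := by
    have : Real.log (((2:ℕ) ^ 2 ^ (j+1) : ℝ) + 1) - Real.log (((2:ℕ) ^ 2 ^ j : ℝ) + 1) ≤ S := by
      rw [hS]
      convert hharm using 2 <;> push_cast <;> ring
    linarith
  -- combine
  have hpow4 : (4:ℝ) ≤ (2:ℝ) ^ (j + 1) := by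
    calc (4:ℝ) = 2 ^ 2 := by norm_num
    _ ≤ 2 ^ (j + 1) := by
        apply pow_le_pow_right₀ (by norm_num)
        omega
  have hXs : s * s / 4 ≤ (2:ℝ) ^ (j + 1) - (2:ℝ) ^ j - 1 := by
    rw [hss]
    have : (2:ℝ) ^ (j + 1) = 2 * 2 ^ j := by ring
    nlinarith [hpow4]
  have hLs : Real.sqrt L * Real.sqrt L = L := Real.mul_self_sqrt hL.le
  -- c j ≥ t/(s√L) * X ≥ t*s*√L/4
  have hA : t / (s * Real.sqrt L) * ((2:ℝ) ^ (j + 1) * L - (2:ℝ) ^ j * L - L) ≤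
      t / (s * Real.sqrt L) * S :=
    mul_le_mul_of_nonneg_left (by linarith [hX]) (by positivity)
  have hB : t * s * Real.sqrt L / 4 ≤ t / (s * Real.sqrt L) *
      ((2:ℝ) ^ (j + 1) * L - (2:ℝ) ^ j * L - L) := by
    rw [div_mul_eq_mul_div, div_le_div_iff₀ (by norm_num) (by positivity)]
    have hfact : ((2:ℝ) ^ (j + 1) * L - (2:ℝ) ^ j * L - L) = ((2:ℝ) ^ (j+1) - 2 ^ j - 1) * L := by
      ring
    rw [hfact]
    have key2 : t * s * Real.sqrt L * (s * Real.sqrt L) = t * ((2:ℝ) ^ (j + 1) * L) := by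
      calc t * s * Real.sqrt L * (s * Real.sqrt L)
          = t * ((s * s) * (Real.sqrt L * Real.sqrt L)) := by ring
        _ = t * ((2:ℝ) ^ (j + 1) * L) := by rw [hss, hLs]
    rw [key2]
    have h4 : (0:ℝ) ≤ 2 ^ j * 2 - 4 := by
      have : (2:ℝ) ^ (j + 1) = 2 ^ j * 2 := by ring
      linarith [hpow4, this ▸ hpow4]
    rw [pow_succ]
    nlinarith [mul_nonneg (mul_nonneg ht0 hL.le) h4]
  have hfin : t * s * Real.sqrt L / 4 ≤
      ∑ n ∈ Finset.Ioc ((2:ℕ) ^ 2 ^ j) (2 ^ 2 ^ (j + 1)),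
        Real.sqrt (T2 a n) / ((n : ℝ) * Real.sqrt (Real.log n)) :=
    le_trans hB (le_trans hA hsum)
  have hrw : s * t = (4 / Real.sqrt L) * (t * s * Real.sqrt L / 4) := by
    field_simp
  rw [hrw]
  exact mul_le_mul_of_nonneg_left hfin (by positivity)


theorem stmt_0 (a : ℕ → ℂ) (hsq : Summable fun k => ‖a k‖ ^ 2)
    (h : Summable fun n : ℕ =>
      Real.sqrt (∑' k : {k : ℕ // n ≤ k}, ‖a k.1‖ ^ 2) / ((n : ℝ) * Real.sqrt (Real.log n))) :
    Summable fun k : ℕ =>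
      (2 : ℝ) ^ ((k : ℝ) / 2) *
        Real.sqrt (∑ l ∈ Finset.Icc (2 ^ (2 ^ k) + 1) (2 ^ (2 ^ (k + 1))), ‖a l‖ ^ 2) := by
  have hL : (0:ℝ) < Real.log 2 := Real.log_pos one_lt_two
  have hfs : Summable (fun n : ℕ =>
      Real.sqrt (T2 a n) / ((n : ℝ) * Real.sqrt (Real.log n))) := h
  have hf0 : ∀ n : ℕ, 0 ≤ Real.sqrt (T2 a n) / ((n : ℝ) * Real.sqrt (Real.log n)) :=
    fun n => by positivity
  have hMmono : Monotone (fun j : ℕ => (2:ℕ) ^ 2 ^ j) := by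
    intro i j hij
    exact Nat.pow_le_pow_right (by norm_num) (Nat.pow_le_pow_right (by norm_num) hij)
  have hcs := block_summable _ hfs hf0 (fun j => (2:ℕ) ^ 2 ^ j) hMmono
  refine (summable_nat_add_iff 2).mp ?_
  refine Summable.of_nonneg_of_le (fun k => by positivity) (fun k => ?_)
    (((summable_nat_add_iff 1).mpr hcs).mul_left (4 / Real.sqrt (Real.log 2)))
  show (2 : ℝ) ^ (((k + 2 : ℕ) : ℝ) / 2) *
      Real.sqrt (∑ l ∈ Finset.Icc (2 ^ 2 ^ (k + 2) + 1) (2 ^ 2 ^ (k + 2 + 1)), ‖a l‖ ^ 2) ≤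
    (4 / Real.sqrt (Real.log 2)) *
      ∑ n ∈ Finset.Ioc ((2:ℕ) ^ 2 ^ (k + 1)) (2 ^ 2 ^ (k + 1 + 1)),
        Real.sqrt (T2 a n) / ((n : ℝ) * Real.sqrt (Real.log n))
  have hb : ∑ l ∈ Finset.Icc ((2:ℕ) ^ 2 ^ (k + 2) + 1) (2 ^ 2 ^ (k + 2 + 1)), ‖a l‖ ^ 2 ≤
      T2 a (2 ^ 2 ^ (k + 2)) :=
    sum_le_T2 a hsq _ _ (fun l hl => le_trans (Nat.le_succ _) (Finset.mem_Icc.mp hl).1)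
  have ecast : (((k + 2 : ℕ)) : ℝ) / 2 = (((k + 1 : ℕ) : ℝ) + 1) / 2 := by push_cast; ring
  calc (2 : ℝ) ^ (((k + 2 : ℕ) : ℝ) / 2) *
      Real.sqrt (∑ l ∈ Finset.Icc ((2:ℕ) ^ 2 ^ (k + 2) + 1) (2 ^ 2 ^ (k + 2 + 1)), ‖a l‖ ^ 2)
      ≤ (2 : ℝ) ^ (((k + 2 : ℕ) : ℝ) / 2) * Real.sqrt (T2 a (2 ^ 2 ^ (k + 2))) :=
        mul_le_mul_of_nonneg_left (Real.sqrt_le_sqrt hb) (by positivity)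
    _ = (2 : ℝ) ^ ((((k + 1 : ℕ) : ℝ) + 1) / 2) * Real.sqrt (T2 a (2 ^ 2 ^ (k + 1 + 1))) := by
        rw [ecast]
    _ ≤ (4 / Real.sqrt (Real.log 2)) *
        ∑ n ∈ Finset.Ioc ((2:ℕ) ^ 2 ^ (k + 1)) (2 ^ 2 ^ (k + 1 + 1)),
          Real.sqrt (T2 a n) / ((n : ℝ) * Real.sqrt (Real.log n)) :=
        key_bound a hsq (k + 1) (Nat.le_add_left 1 k)
end

section
/- If a sequence of complex numbers (a_k) satisfies ∑_{n≥1} (√(∑_{k≥n} |a_k|²))/n^{1-γ/2} < ∞ for some γ ∈ (0,1), then ∑_{k≥1} 2^{γk/2} (∑_{l=2^k+1}^{2^{k+1}} |a_l|²)^{1/2} < ∞. -/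
open Finset Real

theorem stmt_3 (γ : ℝ) (hγ : 0 < γ) (hγ1 : γ < 1) (a : ℕ → ℂ)
    (hsq : Summable fun k => ‖a k‖ ^ 2)
    (h : Summable fun n : ℕ =>
      Real.sqrt (∑' k : {k : ℕ // n ≤ k}, ‖a k.1‖ ^ 2) / (n : ℝ) ^ (1 - γ / 2)) :
    Summable fun k : ℕ =>
      (2 : ℝ) ^ (γ * k / 2) *
        Real.sqrt (∑ l ∈ Finset.Icc (2 ^ k + 1) (2 ^ (k + 1)), ‖a l‖ ^ 2) := by
  set T : ℕ → ℝ := fun n => ∑' k : {k : ℕ // n ≤ k}, ‖a k.1‖ ^ 2 with hT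
  have hTeq : ∀ n, T n = ∑' k, Set.indicator (Set.Ici n) (fun k => ‖a k‖ ^ 2) k := by
    intro n
    exact tsum_subtype (Set.Ici n) (fun k => ‖a k‖ ^ 2)
  have hTnonneg : ∀ n, 0 ≤ T n := by
    intro n
    exact tsum_nonneg fun k => sq_nonneg _
  have hTanti : ∀ m n : ℕ, m ≤ n → T n ≤ T m := by
    intro m n hmn
    rw [hTeq, hTeq]
    refine Summable.tsum_le_tsum ?_ (hsq.indicator _) (hsq.indicator _)
    intro k
    exact Set.indicator_le_indicator_of_subset (Set.Ici_subset_Ici.2 hmn)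
      (fun k => sq_nonneg _) k
  set f : ℕ → ℝ := fun n => Real.sqrt (T n) / (n : ℝ) ^ (1 - γ / 2) with hf
  have hfnn : ∀ n, 0 ≤ f n := fun n =>
    div_nonneg (Real.sqrt_nonneg _) (Real.rpow_nonneg (Nat.cast_nonneg n) _)
  have hfanti : ∀ ⦃m n : ℕ⦄, 0 < m → m ≤ n → f n ≤ f m := by
    intro m n hm hmn
    exact div_le_div₀ (Real.sqrt_nonneg _) (Real.sqrt_le_sqrt (hTanti m n hmn))
      (Real.rpow_pos_of_pos (by exact_mod_cast hm) _)
      (Real.rpow_le_rpow (by positivity) (by exact_mod_cast hmn) (by linarith))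
  have hcond : Summable fun k : ℕ => (2 : ℝ) ^ k * f (2 ^ k) :=
    (summable_condensed_iff_of_nonneg hfnn hfanti).2 h
  refine Summable.of_nonneg_of_le (fun k => by positivity) ?_ hcond
  intro k
  have hblock : ∑ l ∈ Finset.Icc (2 ^ k + 1) (2 ^ (k + 1)), ‖a l‖ ^ 2 ≤ T (2 ^ k) := by
    rw [hTeq]
    calc ∑ l ∈ Finset.Icc (2 ^ k + 1) (2 ^ (k + 1)), ‖a l‖ ^ 2
        = ∑ l ∈ Finset.Icc (2 ^ k + 1) (2 ^ (k + 1)),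
            Set.indicator (Set.Ici (2 ^ k)) (fun k => ‖a k‖ ^ 2) l := by
          refine Finset.sum_congr rfl fun l hl => ?_
          rw [Set.indicator_of_mem]
          exact le_trans (Nat.le_succ _) (Finset.mem_Icc.1 hl).1
      _ ≤ _ := Summable.sum_le_tsum _ (fun l _ => Set.indicator_nonneg
            (fun k _ => sq_nonneg _) _) (hsq.indicator _)
  have hpow : (2 : ℝ) ^ k * f (2 ^ k) = (2 : ℝ) ^ (γ * k / 2) * Real.sqrt (T (2 ^ k)) := by
    rw [hf]
    simp only
    rw [Nat.cast_pow, Nat.cast_ofNat, ← Real.rpow_natCast (2 : ℝ) k,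
      ← Real.rpow_mul (by norm_num : (0:ℝ) ≤ 2),
      div_eq_mul_inv, ← Real.rpow_neg (by norm_num : (0:ℝ) ≤ 2), mul_comm (Real.sqrt _) _,
      ← mul_assoc, ← Real.rpow_add (by norm_num : (0:ℝ) < 2)]
    ring_nf
  rw [hpow]
  gcongr
end

section
/- Let (X_N)_{N≥1} be random variables with E|X_N|^β = O(N^d) for some β, d > 0, and set Φ_β(N) = 2 + max(N, E|X_N|^β). Then E[sup_{N≥1} √(log⁺|X_N| / log Φ_β(N))] < ∞. -/
open Real

lemma key_ineq (β : ℝ) (hβ : 0 < β) (x Φ : ℝ) (hx : 0 ≤ x) (hΦ : 2 ≤ Φ) :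
    Real.sqrt (max (Real.log x) 0 / Real.log Φ) ≤
      (1 + Real.sqrt (3 / β)) + x ^ β / (β * Real.log 2 * Φ ^ 3) := by
  have hlog2 : 0 < Real.log 2 := Real.log_pos one_lt_two
  have hΦpos : (0:ℝ) < Φ := by linarith
  have hlogΦ : Real.log 2 ≤ Real.log Φ := Real.log_le_log (by norm_num) hΦ
  have hlogΦpos : 0 < Real.log Φ := lt_of_lt_of_le hlog2 hlogΦ
  set L : ℝ := β * Real.log x - 3 * Real.log Φ with hL
  set T : ℝ := max (Real.log (x ^ β / Φ ^ 3)) 0 / (β * Real.log 2) with hT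
  have hbl2 : 0 < β * Real.log 2 := mul_pos hβ hlog2
  have hTnn : 0 ≤ T := div_nonneg (le_max_right _ _) hbl2.le
  -- Step A
  have hA : max (Real.log x) 0 / Real.log Φ ≤ 3 / β + T := by
    rcases le_or_gt x 1 with h1 | h1
    · have : Real.log x ≤ 0 := Real.log_nonpos hx h1
      rw [max_eq_right this]
      have : (0:ℝ) / Real.log Φ = 0 := zero_div _
      rw [this]
      positivity
    · have hxpos : 0 < x := lt_trans one_pos h1
      have hlx : 0 < Real.log x := Real.log_pos h1
      rw [max_eq_left hlx.le]
      have hlogpow : Real.log (x ^ β / Φ ^ 3) = L := by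
        rw [Real.log_div (by positivity) (by positivity), Real.log_rpow hxpos,
          Real.log_pow]
        push_cast
        ring
      have key : Real.log x / Real.log Φ = L / (β * Real.log Φ) + 3 / β := by
        field_simp [hL]
        ring
      rw [key, hT, hlogpow]
      rcases le_or_gt L 0 with hL0 | hL0
      · have h1 : L / (β * Real.log Φ) ≤ 0 :=
          div_nonpos_of_nonpos_of_nonneg hL0 (by positivity)
        have h2 : 0 ≤ max L 0 / (β * Real.log 2) :=
          div_nonneg (le_max_right _ _) hbl2.le
        linarith
      · rw [max_eq_left hL0.le]
        have : L / (β * Real.log Φ) ≤ L / (β * Real.log 2) := by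
          apply div_le_div_of_nonneg_left hL0.le hbl2
          exact mul_le_mul_of_nonneg_left hlogΦ hβ.le
        linarith
  -- Step B
  have hB : Real.sqrt (max (Real.log x) 0 / Real.log Φ) ≤ Real.sqrt (3 / β) + 1 + T := by
    calc Real.sqrt (max (Real.log x) 0 / Real.log Φ) ≤ Real.sqrt (3 / β + T) :=
          Real.sqrt_le_sqrt hA
      _ ≤ Real.sqrt (3 / β) + Real.sqrt T := by
          have ha : (0:ℝ) ≤ 3 / β := by positivity
          have h1 := Real.sq_sqrt ha
          have h2 := Real.sq_sqrt hTnn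
          have h3 := Real.sqrt_nonneg (3 / β)
          have h4 := Real.sqrt_nonneg T
          have : 3 / β + T ≤ (Real.sqrt (3 / β) + Real.sqrt T) ^ 2 := by nlinarith
          calc Real.sqrt (3 / β + T) ≤ Real.sqrt ((Real.sqrt (3 / β) + Real.sqrt T) ^ 2) :=
                Real.sqrt_le_sqrt this
            _ = Real.sqrt (3 / β) + Real.sqrt T := Real.sqrt_sq (by positivity)
      _ ≤ Real.sqrt (3 / β) + (1 + T) := by
          have h := Real.sq_sqrt hTnn
          have h2 := Real.sqrt_nonneg T
          nlinarith
      _ = Real.sqrt (3 / β) + 1 + T := by ring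
  -- Step C
  have hC : T ≤ x ^ β / (β * Real.log 2 * Φ ^ 3) := by
    have hlog_le : max (Real.log (x ^ β / Φ ^ 3)) 0 ≤ x ^ β / Φ ^ 3 := by
      rcases eq_or_lt_of_le hx with h0 | h0
      · have : x ^ β = 0 := by
          rw [← h0]; exact Real.zero_rpow hβ.ne'
        simp [this, Real.log_zero]
      · have hy : 0 < x ^ β / Φ ^ 3 := by positivity
        apply max_le _ (le_of_lt hy)
        linarith [Real.log_le_sub_one_of_pos hy]
    rw [hT]
    rw [div_le_div_iff₀ hbl2 (by positivity)]
    calc max (Real.log (x ^ β / Φ ^ 3)) 0 * (β * Real.log 2 * Φ ^ 3)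
        = (max (Real.log (x ^ β / Φ ^ 3)) 0 * Φ ^ 3) * (β * Real.log 2) := by ring
      _ ≤ (x ^ β / Φ ^ 3 * Φ ^ 3) * (β * Real.log 2) := by
          apply mul_le_mul_of_nonneg_right _ hbl2.le
          exact mul_le_mul_of_nonneg_right hlog_le (by positivity)
      _ = x ^ β * (β * Real.log 2) := by field_simp
  linarith

open MeasureTheory ENNReal

theorem stmt_11 {Ω : Type*} [MeasurableSpace Ω] (μ : Measure Ω) [IsProbabilityMeasure μ]
    (X : ℕ → Ω → ℝ) (β d : ℝ) (hβ : 0 < β) (hd : 0 < d)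
    (hint : ∀ N : ℕ, Integrable (fun ω => |X N ω| ^ β) μ)
    (hO : ∃ C : ℝ, ∀ N : ℕ, 1 ≤ N → ∫ ω, |X N ω| ^ β ∂μ ≤ C * (N : ℝ) ^ d)
    (Φ : ℕ → ℝ)
    (hΦ : ∀ N : ℕ, Φ N = 2 + max (N : ℝ) (∫ ω, |X N ω| ^ β ∂μ)) :
    ∫⁻ ω, ⨆ N : {n : ℕ // 1 ≤ n},
        ENNReal.ofReal
          (Real.sqrt (max (Real.log |X N.1 ω|) 0 / Real.log (Φ N.1))) ∂μ < ⊤ := by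
  have hlog2 : 0 < Real.log 2 := Real.log_pos one_lt_two
  have hbl2 : 0 < β * Real.log 2 := mul_pos hβ hlog2
  have hEnn : ∀ N : ℕ, 0 ≤ ∫ ω, |X N ω| ^ β ∂μ := fun N =>
    integral_nonneg fun ω => Real.rpow_nonneg (abs_nonneg _) β
  have hΦN : ∀ N : ℕ, 2 + (N : ℝ) ≤ Φ N := fun N => by
    rw [hΦ]; have := le_max_left (N : ℝ) (∫ ω, |X N ω| ^ β ∂μ); linarith
  have hΦ2 : ∀ N : ℕ, 2 ≤ Φ N := fun N => by
    have := hΦN N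
    have h0 : (0:ℝ) ≤ (N : ℝ) := Nat.cast_nonneg N
    linarith
  have hΦE : ∀ N : ℕ, ∫ ω, |X N ω| ^ β ∂μ ≤ Φ N := fun N => by
    rw [hΦ]; have := le_max_right (N : ℝ) (∫ ω, |X N ω| ^ β ∂μ); linarith
  set C0 : ℝ := 1 + Real.sqrt (3 / β) with hC0
  have hC0nn : 0 ≤ C0 := by positivity
  have hden : ∀ N : ℕ, 0 < β * Real.log 2 * (Φ N) ^ 3 := fun N =>
    mul_pos hbl2 (pow_pos (lt_of_lt_of_le two_pos (hΦ2 N)) 3)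
  set g : ℕ → Ω → ℝ≥0∞ := fun N ω =>
    ENNReal.ofReal (|X N ω| ^ β / (β * Real.log 2 * (Φ N) ^ 3)) with hg
  have hgmeas : ∀ N, AEMeasurable (g N) μ := fun N =>
    (((hint N).aemeasurable.div_const _)).ennreal_ofReal
  have hpt : ∀ ω, (⨆ N : {n : ℕ // 1 ≤ n},
      ENNReal.ofReal (Real.sqrt (max (Real.log |X N.1 ω|) 0 / Real.log (Φ N.1)))) ≤
      ENNReal.ofReal C0 + ∑' N : ℕ, g N ω := by
    intro ω
    apply iSup_le
    rintro ⟨N, hN⟩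
    have hk := key_ineq β hβ |X N ω| (Φ N) (abs_nonneg _) (hΦ2 N)
    calc ENNReal.ofReal (Real.sqrt (max (Real.log |X N ω|) 0 / Real.log (Φ N)))
        ≤ ENNReal.ofReal (C0 + |X N ω| ^ β / (β * Real.log 2 * (Φ N) ^ 3)) :=
          ENNReal.ofReal_le_ofReal hk
      _ = ENNReal.ofReal C0 + g N ω := ENNReal.ofReal_add hC0nn
            (div_nonneg (Real.rpow_nonneg (abs_nonneg _) β) (hden N).le)
      _ ≤ ENNReal.ofReal C0 + ∑' M : ℕ, g M ω := by
          exact add_le_add (le_refl _) (ENNReal.le_tsum N)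
  have hgint : ∀ N : ℕ, ∫⁻ ω, g N ω ∂μ ≤
      ENNReal.ofReal (1 / (β * Real.log 2) * (1 / ((N : ℝ) + 2) ^ 2)) := by
    intro N
    have hInt : Integrable (fun ω => |X N ω| ^ β / (β * Real.log 2 * (Φ N) ^ 3)) μ :=
      (hint N).div_const _
    rw [hg]
    rw [← ofReal_integral_eq_lintegral_ofReal hInt
      (Filter.Eventually.of_forall fun ω =>
        div_nonneg (Real.rpow_nonneg (abs_nonneg _) β) (hden N).le)]
    apply ENNReal.ofReal_le_ofReal
    rw [integral_div]
    have hΦp : (0 : ℝ) < Φ N := lt_of_lt_of_le two_pos (hΦ2 N)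
    have hN2 : (0:ℝ) < (N : ℝ) + 2 := by positivity
    calc (∫ ω, |X N ω| ^ β ∂μ) / (β * Real.log 2 * Φ N ^ 3)
        ≤ Φ N / (β * Real.log 2 * Φ N ^ 3) :=
          (div_le_div_iff_of_pos_right (by positivity)).mpr (hΦE N)
      _ = 1 / (β * Real.log 2) * (1 / Φ N ^ 2) := by field_simp
      _ ≤ 1 / (β * Real.log 2) * (1 / ((N : ℝ) + 2) ^ 2) := by
          apply mul_le_mul_of_nonneg_left _ (one_div_nonneg.mpr hbl2.le)
          apply one_div_le_one_div_of_le (by positivity)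
          nlinarith [hΦN N]
  have hsum : Summable (fun N : ℕ => 1 / (β * Real.log 2) * (1 / ((N : ℝ) + 2) ^ 2)) := by
    apply Summable.mul_left
    have h0 : Summable (fun n : ℕ => 1 / (n : ℝ) ^ 2) :=
      summable_one_div_nat_pow.mpr one_lt_two
    have := (summable_nat_add_iff 2).mpr h0
    apply this.congr
    intro n
    push_cast
    ring
  calc ∫⁻ ω, ⨆ N : {n : ℕ // 1 ≤ n},
        ENNReal.ofReal
          (Real.sqrt (max (Real.log |X N.1 ω|) 0 / Real.log (Φ N.1))) ∂μ
      ≤ ∫⁻ ω, (ENNReal.ofReal C0 + ∑' N : ℕ, g N ω) ∂μ := lintegral_mono hpt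
    _ = ∫⁻ _, ENNReal.ofReal C0 ∂μ + ∫⁻ ω, ∑' N : ℕ, g N ω ∂μ :=
        lintegral_add_left measurable_const _
    _ = ENNReal.ofReal C0 + ∑' N : ℕ, ∫⁻ ω, g N ω ∂μ := by
        rw [lintegral_const, measure_univ, mul_one, lintegral_tsum hgmeas]
    _ ≤ ENNReal.ofReal C0 +
        ∑' N : ℕ, ENNReal.ofReal (1 / (β * Real.log 2) * (1 / ((N : ℝ) + 2) ^ 2)) := by
        exact add_le_add (le_refl _) (ENNReal.tsum_le_tsum hgint)
    _ = ENNReal.ofReal C0 + ENNReal.ofReal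
        (∑' N : ℕ, 1 / (β * Real.log 2) * (1 / ((N : ℝ) + 2) ^ 2)) := by
        rw [ENNReal.ofReal_tsum_of_nonneg (fun n => mul_nonneg (one_div_nonneg.mpr hbl2.le) (by positivity)) hsum]
    _ < ⊤ := by
        exact ENNReal.add_lt_top.mpr ⟨ENNReal.ofReal_lt_top, ENNReal.ofReal_lt_top⟩
end

section
/- Let X be a real random variable with characteristic function φ(t) = E[e^{2iπ tX}] satisfying φ(t)=1 iff t=0 and sup_t |t|^δ|φ(t)| = q < ∞ for some δ > 0. Let K be a compact subset of ℝ with dist(0,K) = 2ε > 0. Then sup_{N≥1} sup_{t∈K} sup_{j∈ℤ, j≠0} |∑_{k=1}^N φ(jt)^k| < ∞. -/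
open MeasureTheory Real Complex Finset

theorem stmt_13 {Ω : Type*} [MeasurableSpace Ω] (μ : Measure Ω) [IsProbabilityMeasure μ]
    (X : Ω → ℝ) (hX : Measurable X) (φ : ℝ → ℂ)
    (hφ : ∀ t : ℝ, φ t = ∫ ω, Complex.exp (2 * π * Complex.I * t * X ω) ∂μ)
    (h1 : ∀ t : ℝ, φ t = 1 ↔ t = 0)
    (δ q : ℝ) (hδ : 0 < δ)
    (h2 : ∀ t : ℝ, |t| ^ δ * ‖φ t‖ ≤ q)
    (K : Set ℝ) (hK : IsCompact K) (ε : ℝ) (hε : 0 < ε)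
    (hdist : ∀ t ∈ K, 2 * ε ≤ |t|) :
    ∃ C : ℝ, ∀ N : ℕ, 1 ≤ N → ∀ t ∈ K, ∀ j : ℤ, j ≠ 0 →
      ‖∑ k ∈ Finset.Icc 1 N, (φ (j * t)) ^ k‖ ≤ C := by
  -- the exponential has norm 1
  have hnexp : ∀ (s x : ℝ), ‖Complex.exp (2 * π * Complex.I * s * x)‖ = 1 := by
    intro s x
    have h : (2 * π * Complex.I * s * x : ℂ) = ((2 * π * s * x : ℝ) : ℂ) * Complex.I := by
      push_cast; ring
    rw [h, Complex.norm_exp_ofReal_mul_I]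
  -- φ has norm at most 1
  have hnorm1 : ∀ s : ℝ, ‖φ s‖ ≤ 1 := by
    intro s
    rw [hφ]
    calc ‖∫ ω, Complex.exp (2 * π * Complex.I * s * X ω) ∂μ‖
        ≤ ∫ ω, ‖Complex.exp (2 * π * Complex.I * s * X ω)‖ ∂μ :=
          norm_integral_le_integral_norm _
      _ = ∫ _ω, (1:ℝ) ∂μ := by simp [hnexp]
      _ = 1 := by simp
  -- φ is continuous
  have hcont : Continuous φ := by
    have hφeq : φ = fun t : ℝ => ∫ ω, Complex.exp (2 * π * Complex.I * t * X ω) ∂μ :=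
      funext hφ
    rw [hφeq]
    apply continuous_of_dominated (bound := fun _ => (1:ℝ))
    · intro t
      exact (Complex.measurable_exp.comp
        (measurable_const.mul (Complex.measurable_ofReal.comp hX))).aestronglyMeasurable
    · intro t
      exact Filter.Eventually.of_forall fun ω => le_of_eq (hnexp t (X ω))
    · exact integrable_const 1
    · exact Filter.Eventually.of_forall fun ω => by fun_prop
  have hq0 : 0 ≤ q := by
    have := h2 0
    rwa [abs_zero, Real.zero_rpow hδ.ne', zero_mul] at this
  set M : ℝ := (2 * q + 1) ^ (1 / δ) with hM
  have hM0 : 0 ≤ M := Real.rpow_nonneg (by linarith) _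
  set B : ℝ := max M (2 * ε) with hB
  have hB2 : 2 * ε ≤ B := le_max_right _ _
  -- tail bound
  have htail : ∀ s : ℝ, B < |s| → ‖φ s‖ ≤ 1 / 2 := by
    intro s hs
    have hMs : M ≤ |s| := le_of_lt (lt_of_le_of_lt (le_max_left _ _) hs)
    have hMd : M ^ δ = 2 * q + 1 := by
      rw [hM, ← Real.rpow_mul (by linarith), one_div_mul_cancel hδ.ne', Real.rpow_one]
    have h1s : 2 * q + 1 ≤ |s| ^ δ := by
      rw [← hMd]
      exact Real.rpow_le_rpow hM0 hMs hδ.le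
    nlinarith [mul_le_mul_of_nonneg_right h1s (norm_nonneg (φ s)), h2 s,
      norm_nonneg (φ s), hq0]
  -- compact annulus
  set A : Set ℝ := Set.Icc (-B) B ∩ {s : ℝ | 2 * ε ≤ |s|} with hA
  have hAc : IsCompact A :=
    isCompact_Icc.inter_right (isClosed_le continuous_const _root_.continuous_abs)
  have hAne : A.Nonempty := by
    refine ⟨2 * ε, ⟨⟨by linarith, hB2⟩, ?_⟩⟩
    simp only [Set.mem_setOf_eq]
    rw [abs_of_pos (by linarith)]
  obtain ⟨s₀, hs₀, hmin⟩ := hAc.exists_isMinOn hAne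
    ((continuous_const.sub hcont).norm).continuousOn
  have hs₀ne : φ s₀ ≠ 1 := by
    intro h
    have h0 := (h1 s₀).mp h
    have := hs₀.2
    rw [h0] at this
    simp at this
    linarith
  have hc1 : 0 < ‖1 - φ s₀‖ := by
    rw [norm_pos_iff]
    exact sub_ne_zero_of_ne (Ne.symm hs₀ne)
  set c : ℝ := min (‖1 - φ s₀‖) (1 / 2) with hc
  have hcpos : 0 < c := lt_min hc1 (by norm_num)
  have hkey : ∀ s : ℝ, 2 * ε ≤ |s| → c ≤ ‖1 - φ s‖ := by
    intro s hs
    rcases le_or_gt (|s|) B with h | h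
    · have hsA : s ∈ A := ⟨⟨(abs_le.mp h).1, (abs_le.mp h).2⟩, hs⟩
      exact le_trans (min_le_left _ _) (isMinOn_iff.mp hmin s hsA)
    · refine le_trans (min_le_right _ _) ?_
      have hφs := htail s h
      calc (1:ℝ) / 2 = 1 - 1 / 2 := by norm_num
        _ ≤ ‖(1:ℂ)‖ - ‖φ s‖ := by rw [norm_one]; linarith
        _ ≤ ‖1 - φ s‖ := norm_sub_norm_le _ _
  refine ⟨2 / c, ?_⟩
  intro N hN t ht j hj
  set z : ℂ := φ (j * t) with hzdef
  have hjt : 2 * ε ≤ |(j : ℝ) * t| := by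
    rw [abs_mul]
    have hj1 : (1:ℝ) ≤ |(j : ℝ)| := by
      have := Int.one_le_abs hj
      exact_mod_cast this
    calc 2 * ε ≤ |t| := hdist t ht
      _ = 1 * |t| := (one_mul _).symm
      _ ≤ |(j : ℝ)| * |t| := mul_le_mul_of_nonneg_right hj1 (abs_nonneg t)
  have hz1 : z ≠ 1 := by
    intro h
    have h0 := (h1 _).mp h
    rw [h0] at hjt
    simp at hjt
    linarith
  have hzn : ‖z‖ ≤ 1 := hnorm1 _
  have hcz : c ≤ ‖z - 1‖ := by
    rw [norm_sub_rev]; exact hkey _ hjt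
  have hsum : ∑ k ∈ Finset.Icc 1 N, z ^ k = z * ∑ i ∈ Finset.range N, z ^ i := by
    rw [← Finset.Ico_add_one_right_eq_Icc, Finset.sum_Ico_eq_sum_range, Finset.mul_sum]
    simp [pow_add]
  rw [hsum, geom_sum_eq hz1, norm_mul, norm_div]
  have h2b : ‖z ^ N - 1‖ ≤ 2 := by
    calc ‖z ^ N - 1‖ ≤ ‖z ^ N‖ + ‖(1:ℂ)‖ := norm_sub_le _ _
      _ ≤ 1 + 1 := by
          rw [norm_pow, norm_one]
          exact add_le_add_left (pow_le_one₀ (norm_nonneg z) hzn) 1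
      _ = 2 := by norm_num
  have hdiv : ‖z ^ N - 1‖ / ‖z - 1‖ ≤ 2 / c := by
    apply div_le_div₀ (by norm_num) h2b hcpos hcz
  have hfin : ‖z‖ * (‖z ^ N - 1‖ / ‖z - 1‖) ≤ 1 * (2 / c) :=
    mul_le_mul hzn hdiv (by positivity) (by norm_num)
  linarith
end
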